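/- Let σ > 0, A > 0, and B be real with 2B + σ² > 0, and set α = √(2B + σ²)/σ; assume α is not an integer. Let c₁, c₂ ≥ 0, not both zero, and suppose y(x) = √x ( c₁ I_α(√(2Ax)/σ) + c₂ I_{−α}(√(2Ax)/σ) ) satisfies y(x) > 0 for all x > 0. Define f(x) = 2σ x y'(x)/y(x) and F(x) = 2σ ln y(x). Then: (i) f satisfies the Riccati equation σ x f'(x) − σ f(x) + (1/2) f(x)² = Ax + B for all x > 0; and (ii) for every μ ≥ 0, setting ν = √(2B + σ² + 4μσ)/σ and assuming ν is not an integer, the function u₀^μ(x) = √x e^{−F(x)/(2σ)} ( c₁ I_ν(√(2Ax)/σ) + c₂ I_{−ν}(√(2Ax)/σ) ) satisfies σ x (u₀^μ)''(x) + f(x) (u₀^μ)'(x) − (μ/x) u₀^μ(x) = 0 for all x > 0, and u₀^0(x) = 1 for all x > 0. -/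

import Mathlib

open Real MeasureTheory

/-- The modified Bessel function of the first kind,
`I_ν(z) = ∑_{k=0}^∞ (z/2)^{2k+ν} / (k! Γ(k+ν+1))`. -/
noncomputable def besselI (ν z : ℝ) : ℝ :=
  ∑' k : ℕ, (z / 2) ^ (2 * (k : ℝ) + ν) / ((Nat.factorial k : ℝ) * Real.Gamma ((k : ℝ) + ν + 1))

open Filter

noncomputable def besselCoef (ν D : ℝ) (k : ℕ) : ℝ :=
  D ^ (2 * (k : ℝ) + ν) / ((Nat.factorial k : ℝ) * Real.Gamma ((k : ℝ) + ν + 1))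

lemma gammaArg_ne (ν : ℝ) (hν : ∀ n : ℤ, ν ≠ (n : ℝ)) (k : ℕ) : ((k : ℝ) + ν + 1) ≠ 0 := by
  intro h
  exact hν (-(k : ℤ) - 1) (by push_cast; linarith)

lemma gamma_ne (ν : ℝ) (hν : ∀ n : ℤ, ν ≠ (n : ℝ)) (k : ℕ) :
    Real.Gamma ((k : ℝ) + ν + 1) ≠ 0 := by
  refine Real.Gamma_ne_zero (fun m h => hν (-(m : ℤ) - (k : ℤ) - 1) ?_)
  push_cast
  linarith

lemma besselCoef_rec (ν D : ℝ) (hν : ∀ n : ℤ, ν ≠ (n : ℝ)) (hD : 0 < D) (k : ℕ) :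
    besselCoef ν D (k + 1) * (((k : ℝ) + 1) * ((k : ℝ) + 1 + ν)) = D ^ 2 * besselCoef ν D k := by
  have hG := gamma_ne ν hν k
  have hG' := gamma_ne ν hν (k + 1)
  have hA := gammaArg_ne ν hν k
  have hGam : Real.Gamma (((k : ℕ) + 1 : ℕ) + ν + 1) = ((k : ℝ) + ν + 1) * Real.Gamma ((k : ℝ) + ν + 1) := by
    push_cast
    rw [show (k : ℝ) + 1 + ν + 1 = ((k : ℝ) + ν + 1) + 1 by ring, Real.Gamma_add_one hA]
  have hpow : D ^ (2 * ((k + 1 : ℕ) : ℝ) + ν) = D ^ 2 * D ^ (2 * (k : ℝ) + ν) := by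
    push_cast
    rw [show 2 * ((k : ℝ) + 1) + ν = 2 + (2 * (k : ℝ) + ν) by ring, Real.rpow_add hD,
      Real.rpow_two]
  have hfac : ((Nat.factorial (k + 1) : ℕ) : ℝ) = ((k : ℝ) + 1) * (Nat.factorial k : ℝ) := by
    rw [Nat.factorial_succ]; push_cast; ring
  unfold besselCoef
  rw [hpow, hfac]
  rw [hGam] at hG' ⊢
  have hfk : (Nat.factorial k : ℝ) ≠ 0 := Nat.cast_ne_zero.mpr (Nat.factorial_ne_zero k)
  have h1 : ((k : ℝ) + 1) ≠ 0 := by positivity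
  have h2 : ((k : ℝ) + ν + 1) ≠ 0 := hA
  field_simp
  ring


lemma summable_besselCoef (ν D : ℝ) (hν : ∀ n : ℤ, ν ≠ (n : ℝ)) (hD : 0 < D)
    (R : ℝ) (hR : 0 < R) : Summable (fun k => |besselCoef ν D k| * R ^ k) := by
  apply summable_of_ratio_norm_eventually_le (r := 1/2) (by norm_num)
  filter_upwards [eventually_ge_atTop (⌈|ν|⌉₊ + ⌈2 * D ^ 2 * R⌉₊)] with k hk
  have hk1 : (⌈|ν|⌉₊ : ℝ) ≤ (k : ℝ) := by exact_mod_cast le_trans (Nat.le_add_right _ _) hk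
  have hk2 : (⌈2 * D ^ 2 * R⌉₊ : ℝ) ≤ (k : ℝ) := by
    exact_mod_cast le_trans (Nat.le_add_left _ _) hk
  have hν' : |ν| ≤ (k : ℝ) := le_trans (Nat.le_ceil _) hk1
  have hDR : 2 * D ^ 2 * R ≤ (k : ℝ) := le_trans (Nat.le_ceil _) hk2
  have hnn : (0:ℝ) ≤ |besselCoef ν D (k+1)| := abs_nonneg _
  have hnn2 : (0:ℝ) ≤ |besselCoef ν D k| := abs_nonneg _
  have hkpos : (0:ℝ) < (k:ℝ) + 1 := by positivity
  have habs : |besselCoef ν D (k+1)| * (((k : ℝ) + 1) * |(k : ℝ) + 1 + ν|) =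
      D ^ 2 * |besselCoef ν D k| :=
    calc |besselCoef ν D (k+1)| * (((k : ℝ) + 1) * |(k : ℝ) + 1 + ν|)
        = |besselCoef ν D (k+1) * (((k : ℝ) + 1) * ((k : ℝ) + 1 + ν))| := by
          rw [abs_mul, abs_mul, abs_of_pos hkpos]
      _ = |D ^ 2 * besselCoef ν D k| := by rw [besselCoef_rec ν D hν hD k]
      _ = D ^ 2 * |besselCoef ν D k| := by
          rw [abs_mul, abs_of_pos (by positivity : (0:ℝ) < D ^ 2)]
  have h1 : (1 : ℝ) ≤ |(k : ℝ) + 1 + ν| := by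
    have h := neg_abs_le ν
    exact le_trans (by linarith) (le_abs_self _)
  have hprod : 2 * (D ^ 2 * R) ≤ ((k : ℝ) + 1) * |(k : ℝ) + 1 + ν| := by
    nlinarith [abs_nonneg ((k : ℝ) + 1 + ν)]
  have hmul := mul_le_mul_of_nonneg_left hprod hnn
  rw [habs] at hmul
  have hD2 : (0:ℝ) < D ^ 2 := by positivity
  have h2tR : 2 * |besselCoef ν D (k+1)| * R ≤ |besselCoef ν D k| := by
    rw [← mul_le_mul_iff_right₀ hD2]; nlinarith
  have hRk : (0:ℝ) ≤ R ^ k := by positivity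
  have e1 : ‖|besselCoef ν D (k+1)| * R ^ (k+1)‖ = |besselCoef ν D (k+1)| * R ^ (k+1) :=
    Real.norm_of_nonneg (by positivity)
  have e2 : ‖|besselCoef ν D k| * R ^ k‖ = |besselCoef ν D k| * R ^ k :=
    Real.norm_of_nonneg (by positivity)
  rw [e1, e2, pow_succ]
  nlinarith [mul_le_mul_of_nonneg_right h2tR hRk]

/-- class of coefficient sequences whose series has infinite radius -/
def Ecoef (b : ℕ → ℝ) : Prop := ∀ R : ℝ, 0 < R → Summable (fun k => |b k| * R ^ k)

lemma Ecoef_besselCoef (ν D : ℝ) (hν : ∀ n : ℤ, ν ≠ (n : ℝ)) (hD : 0 < D) :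
    Ecoef (besselCoef ν D) := fun R hR => summable_besselCoef ν D hν hD R hR

lemma Ecoef.mul_linear {b : ℕ → ℝ} (hb : Ecoef b) (e : ℝ) :
    Ecoef (fun k => b k * ((k : ℝ) + e)) := by
  intro R hR
  refine Summable.of_nonneg_of_le (fun k => by positivity)
    (fun k => ?_) (((hb (2 * R) (by positivity)).mul_left (|e| + 2)))
  have h2k : (k : ℝ) + 1 ≤ 2 ^ k := by exact_mod_cast (Nat.lt_two_pow_self : k < 2 ^ k)
  have hk0 : (0:ℝ) ≤ (k : ℝ) := Nat.cast_nonneg k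
  have h1 : (1:ℝ) ≤ 2 ^ k := by linarith
  have hek : |(k : ℝ) + e| ≤ (|e| + 2) * 2 ^ k := by
    have ha : |(k : ℝ) + e| ≤ (k : ℝ) + |e| := by
      calc |(k : ℝ) + e| ≤ |(k : ℝ)| + |e| := abs_add_le _ _
        _ = (k : ℝ) + |e| := by rw [abs_of_nonneg hk0]
    nlinarith [abs_nonneg e]
  have hRk : (0:ℝ) ≤ R ^ k := by positivity
  have hbk : (0:ℝ) ≤ |b k| := abs_nonneg _
  calc |b k * ((k : ℝ) + e)| * R ^ k = |b k| * |(k : ℝ) + e| * R ^ k := by rw [abs_mul]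
    _ ≤ |b k| * ((|e| + 2) * 2 ^ k) * R ^ k := by
        apply mul_le_mul_of_nonneg_right (mul_le_mul_of_nonneg_left hek hbk) hRk
    _ = (|e| + 2) * (|b k| * (2 * R) ^ k) := by rw [mul_pow]; ring

/-- generalized power series `∑ b k * x^(k+e)` -/
noncomputable def PS (b : ℕ → ℝ) (e : ℝ) (x : ℝ) : ℝ := ∑' k : ℕ, b k * x ^ ((k : ℝ) + e)

lemma summable_PS {b : ℕ → ℝ} (hb : Ecoef b) (e : ℝ) {x : ℝ} (hx : 0 < x) :
    Summable (fun k => b k * x ^ ((k : ℝ) + e)) := by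
  refine Summable.of_norm_bounded (((hb x hx).mul_left (x ^ e))) (fun k => ?_)
  have hsplit : x ^ ((k : ℝ) + e) = x ^ (k : ℕ) * x ^ e := by
    rw [← Real.rpow_natCast x k, ← Real.rpow_add hx]
  rw [Real.norm_eq_abs, abs_mul, hsplit, abs_of_pos (by positivity : (0:ℝ) < x ^ (k:ℕ) * x ^ e)]
  ring_nf
  exact le_of_eq (by ring)

lemma hasDerivAt_PS {b : ℕ → ℝ} (hb : Ecoef b) (e : ℝ) {x : ℝ} (hx : 0 < x) :
    HasDerivAt (PS b e) (PS (fun k => b k * ((k : ℝ) + e)) (e - 1) x) x := by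
  have hC : (0:ℝ) < max ((x/2) ^ (e-1)) ((2*x) ^ (e-1)) :=
    lt_max_of_lt_left (Real.rpow_pos_of_pos (by linarith) _)
  set C := max ((x/2) ^ (e-1)) ((2*x) ^ (e-1)) with hCdef
  have key : HasDerivAt (fun u => ∑' k : ℕ, b k * u ^ ((k : ℝ) + e))
      (∑' k : ℕ, (b k * ((k : ℝ) + e)) * x ^ ((k : ℝ) + e - 1)) x := by
    refine hasDerivAt_tsum_of_isPreconnected
      (u := fun k => |b k * ((k : ℝ) + e)| * (2*x) ^ k * C)
      (((hb.mul_linear e) (2*x) (by linarith)).mul_right C)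
      (isOpen_Ioo (a := x/2) (b := 2*x)) isPreconnected_Ioo
      (g' := fun k u => (b k * ((k : ℝ) + e)) * u ^ ((k : ℝ) + e - 1))
      (fun k u hu => ?_) (fun k u hu => ?_)
      (⟨by linarith, by linarith⟩ : x ∈ Set.Ioo (x/2) (2*x))
      (summable_PS hb e hx) (⟨by linarith, by linarith⟩ : x ∈ Set.Ioo (x/2) (2*x))
    · have hu0 : u ≠ 0 := by have := hu.1; intro h; rw [h] at this; linarith
      have := (Real.hasDerivAt_rpow_const (x := u) (p := (k : ℝ) + e) (Or.inl hu0)).const_mul (b k)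
      exact this.congr_deriv (by ring)
    · have hu0 : (0:ℝ) < u := by have := hu.1; linarith
      have hu2 : u ≤ 2*x := le_of_lt hu.2
      have hrs : u ^ ((k : ℝ) + e - 1) = u ^ (k : ℕ) * u ^ (e - 1) := by
        rw [← Real.rpow_natCast u k, ← Real.rpow_add hu0]; ring_nf
      have h1 : u ^ (k : ℕ) ≤ (2*x) ^ k := pow_le_pow_left₀ (le_of_lt hu0) hu2 k
      have h2 : u ^ (e-1) ≤ C := by
        rcases le_or_gt 0 (e-1) with h | h
        · exact le_trans (Real.rpow_le_rpow (le_of_lt hu0) hu2 h) (le_max_right _ _)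
        · exact le_trans (Real.rpow_le_rpow_of_nonpos (by linarith : (0:ℝ) < x/2)
            (le_of_lt hu.1) (le_of_lt h)) (le_max_left _ _)
      have hup : (0:ℝ) < u ^ ((k : ℝ) + e - 1) := Real.rpow_pos_of_pos hu0 _
      simp only [Real.norm_eq_abs, abs_mul, abs_of_pos hup]
      calc |b k| * |(k : ℝ) + e| * u ^ ((k : ℝ) + e - 1)
          = (|b k| * |(k : ℝ) + e|) * (u ^ (k:ℕ) * u ^ (e-1)) := by rw [hrs]
        _ ≤ (|b k| * |(k : ℝ) + e|) * ((2*x) ^ k * C) :=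
            mul_le_mul_of_nonneg_left
              (mul_le_mul h1 h2 (Real.rpow_pos_of_pos hu0 _).le (by positivity))
              (by positivity)
        _ = |b k| * |(k : ℝ) + e| * (2*x) ^ k * C := by ring
  have heq : PS (fun k => b k * ((k : ℝ) + e)) (e - 1) x
      = ∑' k : ℕ, (b k * ((k : ℝ) + e)) * x ^ ((k : ℝ) + e - 1) := by
    unfold PS
    refine tsum_congr (fun k => ?_)
    congr 1
    ring
  rw [heq]
  exact key

noncomputable def bc1 (ν D : ℝ) : ℕ → ℝ := fun k => besselCoef ν D k * ((k : ℝ) + (ν+1)/2)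
noncomputable def bc2 (ν D : ℝ) : ℕ → ℝ := fun k => bc1 ν D k * ((k : ℝ) + ((ν+1)/2 - 1))

noncomputable def W0 (ν D : ℝ) : ℝ → ℝ := PS (besselCoef ν D) ((ν+1)/2)
noncomputable def W1 (ν D : ℝ) : ℝ → ℝ := PS (bc1 ν D) ((ν+1)/2 - 1)
noncomputable def W2 (ν D : ℝ) : ℝ → ℝ := PS (bc2 ν D) ((ν+1)/2 - 1 - 1)

lemma Ecoef_bc1 (ν D : ℝ) (hν : ∀ n : ℤ, ν ≠ (n : ℝ)) (hD : 0 < D) : Ecoef (bc1 ν D) :=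
  (Ecoef_besselCoef ν D hν hD).mul_linear _

lemma Ecoef_bc2 (ν D : ℝ) (hν : ∀ n : ℤ, ν ≠ (n : ℝ)) (hD : 0 < D) : Ecoef (bc2 ν D) :=
  (Ecoef_bc1 ν D hν hD).mul_linear _

lemma hasDerivAt_W0 (ν D : ℝ) (hν : ∀ n : ℤ, ν ≠ (n : ℝ)) (hD : 0 < D) {x : ℝ} (hx : 0 < x) :
    HasDerivAt (W0 ν D) (W1 ν D x) x :=
  hasDerivAt_PS (Ecoef_besselCoef ν D hν hD) _ hx

lemma hasDerivAt_W1 (ν D : ℝ) (hν : ∀ n : ℤ, ν ≠ (n : ℝ)) (hD : 0 < D) {x : ℝ} (hx : 0 < x) :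
    HasDerivAt (W1 ν D) (W2 ν D x) x :=
  hasDerivAt_PS (Ecoef_bc1 ν D hν hD) _ hx

lemma W_ode (ν D : ℝ) (hν : ∀ n : ℤ, ν ≠ (n : ℝ)) (hD : 0 < D) {x : ℝ} (hx : 0 < x) :
    x ^ 2 * W2 ν D x = D ^ 2 * x * W0 ν D x + ((ν^2 - 1)/4) * W0 ν D x := by
  set e : ℝ := (ν+1)/2 with he
  set a : ℕ → ℝ := besselCoef ν D with ha
  have hEa : Ecoef a := Ecoef_besselCoef ν D hν hD
  have S0 : Summable (fun k => a k * x ^ ((k : ℝ) + e)) := summable_PS hEa e hx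
  have hEg : Ecoef (fun k => (a k * ((k : ℝ) + 0)) * ((k : ℝ) + ν)) :=
    (hEa.mul_linear 0).mul_linear ν
  have Sg : Summable (fun k => (a k * ((k : ℝ) + 0)) * ((k : ℝ) + ν) * x ^ ((k : ℝ) + e)) :=
    summable_PS hEg e hx
  -- LHS as a single series
  have hL : x ^ 2 * W2 ν D x = ∑' k : ℕ, bc2 ν D k * x ^ ((k : ℝ) + e) := by
    unfold W2 PS
    rw [← tsum_mul_left]
    refine tsum_congr (fun k => ?_)
    rw [← Real.rpow_natCast x 2, ← mul_assoc, mul_comm (x ^ ((2:ℕ):ℝ)) (bc2 ν D k), mul_assoc,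
      ← Real.rpow_add hx]
    congr 1
    rw [he]
    ring
  -- split the series
  have hsplit : ∀ k : ℕ, bc2 ν D k * x ^ ((k : ℝ) + e) =
      (a k * ((k : ℝ) + 0)) * ((k : ℝ) + ν) * x ^ ((k : ℝ) + e)
        + ((ν^2 - 1)/4) * (a k * x ^ ((k : ℝ) + e)) := by
    intro k
    have : bc2 ν D k = (a k * ((k : ℝ) + 0)) * ((k : ℝ) + ν) + ((ν^2 - 1)/4) * a k := by
      unfold bc2 bc1
      rw [← ha, ← he]
      ring
    rw [this]; ring
  have hsum : ∑' k : ℕ, bc2 ν D k * x ^ ((k : ℝ) + e) =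
      (∑' k : ℕ, (a k * ((k : ℝ) + 0)) * ((k : ℝ) + ν) * x ^ ((k : ℝ) + e))
        + ((ν^2 - 1)/4) * W0 ν D x := by
    rw [tsum_congr hsplit, Summable.tsum_add Sg (S0.mul_left _), tsum_mul_left]
    rfl
  -- reindex the first series
  have hshift : (∑' k : ℕ, (a k * ((k : ℝ) + 0)) * ((k : ℝ) + ν) * x ^ ((k : ℝ) + e))
      = D ^ 2 * x * W0 ν D x := by
    rw [Summable.tsum_eq_zero_add Sg]
    have h0 : (a 0 * ((0:ℕ) + 0)) * (((0:ℕ):ℝ) + ν) * x ^ (((0:ℕ):ℝ) + e) = 0 := by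
      norm_num
    rw [h0, zero_add]
    have hterm : ∀ k : ℕ, (a (k+1) * (((k+1:ℕ):ℝ) + 0)) * (((k+1:ℕ):ℝ) + ν)
        * x ^ (((k+1:ℕ):ℝ) + e) = D ^ 2 * x * (a k * x ^ ((k : ℝ) + e)) := by
      intro k
      have hrec : a (k+1) * (((k : ℝ) + 1) * ((k : ℝ) + 1 + ν)) = D ^ 2 * a k :=
        besselCoef_rec ν D hν hD k
      have hxp : x ^ (((k+1:ℕ):ℝ) + e) = x * x ^ ((k : ℝ) + e) := by
        push_cast
        rw [show (k : ℝ) + 1 + e = 1 + ((k : ℝ) + e) by ring, Real.rpow_add hx, Real.rpow_one]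
      rw [hxp]
      push_cast
      linear_combination (x * x ^ ((k:ℝ) + e)) * hrec
    rw [tsum_congr hterm, tsum_mul_left]
    rfl
  rw [hL, hsum, hshift]

lemma W0_eq_bessel (ν D x : ℝ) (hD : 0 < D) (hx : 0 < x) :
    Real.sqrt x * besselI ν (2 * D * Real.sqrt x) = W0 ν D x := by
  unfold besselI W0 PS besselCoef
  rw [← tsum_mul_left]
  refine tsum_congr (fun k => ?_)
  have hsx : (0:ℝ) < Real.sqrt x := Real.sqrt_pos.mpr hx
  have h2 : (2 * D * Real.sqrt x) / 2 = D * Real.sqrt x := by ring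
  have e2 : Real.sqrt x * (D * Real.sqrt x) ^ (2*(k:ℝ)+ν)
      = D ^ (2*(k:ℝ)+ν) * x ^ ((k:ℝ) + (ν+1)/2) := by
    calc Real.sqrt x * (D * Real.sqrt x) ^ (2*(k:ℝ)+ν)
        = D ^ (2*(k:ℝ)+ν) * (x ^ ((1:ℝ)/2) * x ^ (((1:ℝ)/2) * (2*(k:ℝ)+ν))) := by
          rw [Real.mul_rpow (le_of_lt hD) (le_of_lt hsx), Real.sqrt_eq_rpow,
            ← Real.rpow_mul (le_of_lt hx)]
          ring
      _ = D ^ (2*(k:ℝ)+ν) * x ^ ((1:ℝ)/2 + ((1:ℝ)/2) * (2*(k:ℝ)+ν)) := by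
          rw [Real.rpow_add hx]
      _ = D ^ (2*(k:ℝ)+ν) * x ^ ((k:ℝ) + (ν+1)/2) := by
          congr 1
          ring
  rw [h2, div_eq_mul_inv, div_eq_mul_inv]
  linear_combination (((Nat.factorial k : ℝ)) * Real.Gamma ((k:ℝ)+ν+1))⁻¹ * e2

lemma neg_not_int {ν : ℝ} (hν : ∀ n : ℤ, ν ≠ (n : ℝ)) : ∀ n : ℤ, -ν ≠ (n : ℝ) := by
  intro n h
  apply hν (-n)
  push_cast
  linarith

noncomputable def Yl0 (c₁ c₂ ν D x : ℝ) : ℝ := c₁ * W0 ν D x + c₂ * W0 (-ν) D x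
noncomputable def Yl1 (c₁ c₂ ν D x : ℝ) : ℝ := c₁ * W1 ν D x + c₂ * W1 (-ν) D x
noncomputable def Yl2 (c₁ c₂ ν D x : ℝ) : ℝ := c₁ * W2 ν D x + c₂ * W2 (-ν) D x

lemma hasDerivAt_Yl0 (c₁ c₂ ν D : ℝ) (hν : ∀ n : ℤ, ν ≠ (n : ℝ)) (hD : 0 < D)
    {x : ℝ} (hx : 0 < x) : HasDerivAt (fun t => Yl0 c₁ c₂ ν D t) (Yl1 c₁ c₂ ν D x) x :=
  ((hasDerivAt_W0 ν D hν hD hx).const_mul c₁).add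
    ((hasDerivAt_W0 (-ν) D (neg_not_int hν) hD hx).const_mul c₂)

lemma hasDerivAt_Yl1 (c₁ c₂ ν D : ℝ) (hν : ∀ n : ℤ, ν ≠ (n : ℝ)) (hD : 0 < D)
    {x : ℝ} (hx : 0 < x) : HasDerivAt (fun t => Yl1 c₁ c₂ ν D t) (Yl2 c₁ c₂ ν D x) x :=
  ((hasDerivAt_W1 ν D hν hD hx).const_mul c₁).add
    ((hasDerivAt_W1 (-ν) D (neg_not_int hν) hD hx).const_mul c₂)

lemma Yl_ode (c₁ c₂ ν D : ℝ) (hν : ∀ n : ℤ, ν ≠ (n : ℝ)) (hD : 0 < D) {x : ℝ} (hx : 0 < x) :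
    x ^ 2 * Yl2 c₁ c₂ ν D x = D ^ 2 * x * Yl0 c₁ c₂ ν D x + ((ν^2 - 1)/4) * Yl0 c₁ c₂ ν D x := by
  have h1 := W_ode ν D hν hD hx
  have h2 := W_ode (-ν) D (neg_not_int hν) hD hx
  unfold Yl0 Yl2
  rw [show (-ν)^2 = ν^2 by ring] at h2
  linear_combination c₁ * h1 + c₂ * h2

lemma Yl0_eq_bessel (c₁ c₂ ν D x : ℝ) (hD : 0 < D) (hx : 0 < x) :
    Real.sqrt x * (c₁ * besselI ν (2 * D * Real.sqrt x) + c₂ * besselI (-ν) (2 * D * Real.sqrt x))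
      = Yl0 c₁ c₂ ν D x := by
  unfold Yl0
  rw [← W0_eq_bessel ν D x hD hx, ← W0_eq_bessel (-ν) D x hD hx]
  ring

/-- Lemma 4.1 and the construction in the proof of Theorem 4.2: the drift
`f = 2σ x y'/y` built from `y(x) = √x (c₁ I_α(√(2Ax)/σ) + c₂ I_{-α}(√(2Ax)/σ))` solves the
Riccati equation `σ x f' - σ f + f²/2 = Ax + B`, and for every `μ ≥ 0` the function
`u₀^μ(x) = √x e^{-F(x)/(2σ)} (c₁ I_ν(√(2Ax)/σ) + c₂ I_{-ν}(√(2Ax)/σ))` is a stationary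
solution of `σ x u'' + f u' - (μ/x) u = 0` with `u₀⁰ = 1`. -/
theorem stmt_12 (σ A B α : ℝ) (hσ : 0 < σ) (hA : 0 < A) (hB : 0 < 2 * B + σ ^ 2)
    (hα : α = Real.sqrt (2 * B + σ ^ 2) / σ) (hαint : ∀ n : ℤ, α ≠ (n : ℝ))
    (c₁ c₂ : ℝ) (hc₁ : 0 ≤ c₁) (hc₂ : 0 ≤ c₂) (hne : ¬(c₁ = 0 ∧ c₂ = 0))
    (y : ℝ → ℝ)
    (hy : ∀ x, y x = Real.sqrt x * (c₁ * besselI α (Real.sqrt (2 * A * x) / σ)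
        + c₂ * besselI (-α) (Real.sqrt (2 * A * x) / σ)))
    (hypos : ∀ x > (0 : ℝ), 0 < y x)
    (f F : ℝ → ℝ)
    (hf : ∀ x, f x = 2 * σ * x * deriv y x / y x)
    (hF : ∀ x, F x = 2 * σ * Real.log (y x)) :
    (∀ x > (0 : ℝ),
      σ * x * deriv f x - σ * f x + (1 / 2) * (f x) ^ 2 = A * x + B)
    ∧ (∀ μ : ℝ, 0 ≤ μ → ∀ ν : ℝ,
        ν = Real.sqrt (2 * B + σ ^ 2 + 4 * μ * σ) / σ → (∀ n : ℤ, ν ≠ (n : ℝ)) →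
        ∀ u₀ : ℝ → ℝ,
          (∀ x, u₀ x = Real.sqrt x * Real.exp (-F x / (2 * σ))
              * (c₁ * besselI ν (Real.sqrt (2 * A * x) / σ)
                + c₂ * besselI (-ν) (Real.sqrt (2 * A * x) / σ))) →
          (∀ x > (0 : ℝ),
            σ * x * deriv (deriv u₀) x + f x * deriv u₀ x - (μ / x) * u₀ x = 0)
          ∧ (μ = 0 → ∀ x > (0 : ℝ), u₀ x = 1)) := by
  have hσ' : σ ≠ 0 := ne_of_gt hσ
  set D : ℝ := Real.sqrt (2 * A) / (2 * σ) with hDdef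
  have hD : 0 < D := div_pos (Real.sqrt_pos.mpr (by linarith)) (by linarith)
  have hz : ∀ x : ℝ, 0 < x → Real.sqrt (2 * A * x) / σ = 2 * D * Real.sqrt x := by
    intro x hx
    rw [Real.sqrt_mul (by positivity : (0:ℝ) ≤ 2 * A) x, hDdef]
    field_simp
  have hD2 : 2 * σ ^ 2 * D ^ 2 = A := by
    rw [hDdef, div_pow, Real.sq_sqrt (by positivity : (0:ℝ) ≤ 2 * A)]
    field_simp
  have hα2 : σ ^ 2 * α ^ 2 = 2 * B + σ ^ 2 := by
    rw [hα, div_pow, Real.sq_sqrt hB.le]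
    field_simp
  have hyY : ∀ t, 0 < t → y t = Yl0 c₁ c₂ α D t := by
    intro t ht
    rw [hy t, hz t ht, Yl0_eq_bessel c₁ c₂ α D t hD ht]
  have hY0pos : ∀ t, 0 < t → 0 < Yl0 c₁ c₂ α D t := by
    intro t ht
    rw [← hyY t ht]
    exact hypos t ht
  have hdy : ∀ t, 0 < t → HasDerivAt y (Yl1 c₁ c₂ α D t) t := by
    intro t ht
    refine (hasDerivAt_Yl0 c₁ c₂ α D hαint hD ht).congr_of_eventuallyEq ?_
    exact Filter.eventuallyEq_of_mem (Ioi_mem_nhds ht) (fun s hs => hyY s hs)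
  have hfY : ∀ t, 0 < t → f t = 2 * σ * t * Yl1 c₁ c₂ α D t / Yl0 c₁ c₂ α D t := by
    intro t ht
    rw [hf t, (hdy t ht).deriv, hyY t ht]
  -- the Riccati part
  have riccati : ∀ x > (0 : ℝ),
      σ * x * deriv f x - σ * f x + (1 / 2) * (f x) ^ 2 = A * x + B := by
    intro x hx
    have hP : Yl0 c₁ c₂ α D x ≠ 0 := ne_of_gt (hY0pos x hx)
    have hnum : HasDerivAt (fun t => 2 * σ * t * Yl1 c₁ c₂ α D t)
        (2 * σ * Yl1 c₁ c₂ α D x + 2 * σ * x * Yl2 c₁ c₂ α D x) x := by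
      have h1 : HasDerivAt (fun t : ℝ => 2 * σ * t) (2 * σ) x := by
        simpa using (hasDerivAt_id x).const_mul (2 * σ)
      have := h1.mul (hasDerivAt_Yl1 c₁ c₂ α D hαint hD hx)
      exact this
    have hφ : HasDerivAt (fun t => 2 * σ * t * Yl1 c₁ c₂ α D t / Yl0 c₁ c₂ α D t)
        (((2 * σ * Yl1 c₁ c₂ α D x + 2 * σ * x * Yl2 c₁ c₂ α D x) * Yl0 c₁ c₂ α D x -
          2 * σ * x * Yl1 c₁ c₂ α D x * Yl1 c₁ c₂ α D x) / (Yl0 c₁ c₂ α D x) ^ 2) x :=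
      hnum.div (hasDerivAt_Yl0 c₁ c₂ α D hαint hD hx) hP
    have hdf : deriv f x = ((2 * σ * Yl1 c₁ c₂ α D x + 2 * σ * x * Yl2 c₁ c₂ α D x) * Yl0 c₁ c₂ α D x -
          2 * σ * x * Yl1 c₁ c₂ α D x * Yl1 c₁ c₂ α D x) / (Yl0 c₁ c₂ α D x) ^ 2 := by
      rw [Filter.EventuallyEq.deriv_eq
        (Filter.eventuallyEq_of_mem (Ioi_mem_nhds hx) (fun s hs => hfY s hs))]
      exact hφ.deriv
    have hode := Yl_ode c₁ c₂ α D hαint hD hx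
    have hode2 : 2 * σ ^ 2 * x ^ 2 * Yl2 c₁ c₂ α D x = (A * x + B) * Yl0 c₁ c₂ α D x := by
      linear_combination (2 * σ ^ 2) * hode + (x * Yl0 c₁ c₂ α D x) * hD2
        + (Yl0 c₁ c₂ α D x / 2) * hα2
    have hY2 : Yl2 c₁ c₂ α D x = (A * x + B) * Yl0 c₁ c₂ α D x / (2 * σ ^ 2 * x ^ 2) := by
      rw [eq_div_iff (by positivity : (2 * σ ^ 2 * x ^ 2) ≠ 0)]
      linear_combination hode2
    rw [hdf, hfY x hx, hY2]
    field_simp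
    ring
  refine ⟨riccati, ?_⟩
  intro μ hμ ν hν hνint u₀ hu₀
  have hνα : (0:ℝ) ≤ 2 * B + σ ^ 2 + 4 * μ * σ := by nlinarith
  have hν2 : σ ^ 2 * ν ^ 2 = 2 * B + σ ^ 2 + 4 * μ * σ := by
    rw [hν, div_pow, Real.sq_sqrt hνα]
    field_simp
  have hu₀Y : ∀ t, 0 < t → u₀ t = Yl0 c₁ c₂ ν D t / Yl0 c₁ c₂ α D t := by
    intro t ht
    have hyt := hypos t ht
    have hexp : Real.exp (-(2 * σ * Real.log (y t)) / (2 * σ)) = (y t)⁻¹ := by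
      rw [show -(2 * σ * Real.log (y t)) / (2 * σ) = -Real.log (y t) by field_simp,
        Real.exp_neg, Real.exp_log hyt]
    rw [hu₀ t, hF t, hexp, hz t ht, hyY t ht]
    have hYν := Yl0_eq_bessel c₁ c₂ ν D t hD ht
    have hPα : Yl0 c₁ c₂ α D t ≠ 0 := ne_of_gt (hY0pos t ht)
    field_simp
    rw [← hYν]; ring_nf
  constructor
  · intro x hx
    have hPα : Yl0 c₁ c₂ α D x ≠ 0 := ne_of_gt (hY0pos x hx)
    set U1 : ℝ → ℝ := fun t =>
      (Yl1 c₁ c₂ ν D t * Yl0 c₁ c₂ α D t - Yl0 c₁ c₂ ν D t * Yl1 c₁ c₂ α D t)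
        / (Yl0 c₁ c₂ α D t) ^ 2 with hU1def
    have hdU : ∀ t, 0 < t → HasDerivAt u₀ (U1 t) t := by
      intro t ht
      have h := (hasDerivAt_Yl0 c₁ c₂ ν D hνint hD ht).div
        (hasDerivAt_Yl0 c₁ c₂ α D hαint hD ht) (ne_of_gt (hY0pos t ht))
      exact h.congr_of_eventuallyEq
        (Filter.eventuallyEq_of_mem (Ioi_mem_nhds ht) (fun s hs => hu₀Y s hs))
    have hderiv_u₀ : ∀ t, 0 < t → deriv u₀ t = U1 t := fun t ht => (hdU t ht).deriv
    have hU1deriv : HasDerivAt U1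
        ((((Yl2 c₁ c₂ ν D x * Yl0 c₁ c₂ α D x + Yl1 c₁ c₂ ν D x * Yl1 c₁ c₂ α D x)
            - (Yl1 c₁ c₂ ν D x * Yl1 c₁ c₂ α D x + Yl0 c₁ c₂ ν D x * Yl2 c₁ c₂ α D x))
            * (Yl0 c₁ c₂ α D x) ^ 2
          - (Yl1 c₁ c₂ ν D x * Yl0 c₁ c₂ α D x - Yl0 c₁ c₂ ν D x * Yl1 c₁ c₂ α D x)
            * ((2:ℕ) * (Yl0 c₁ c₂ α D x) ^ 1 * Yl1 c₁ c₂ α D x))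
          / ((Yl0 c₁ c₂ α D x) ^ 2) ^ 2) x := by
      have hnum := ((hasDerivAt_Yl1 c₁ c₂ ν D hνint hD hx).mul
          (hasDerivAt_Yl0 c₁ c₂ α D hαint hD hx)).sub
        ((hasDerivAt_Yl0 c₁ c₂ ν D hνint hD hx).mul (hasDerivAt_Yl1 c₁ c₂ α D hαint hD hx))
      have hden := (hasDerivAt_Yl0 c₁ c₂ α D hαint hD hx).pow 2
      exact hnum.div hden (pow_ne_zero 2 hPα)
    have hd2 : deriv (deriv u₀) x = (((Yl2 c₁ c₂ ν D x * Yl0 c₁ c₂ α D x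
            + Yl1 c₁ c₂ ν D x * Yl1 c₁ c₂ α D x)
            - (Yl1 c₁ c₂ ν D x * Yl1 c₁ c₂ α D x + Yl0 c₁ c₂ ν D x * Yl2 c₁ c₂ α D x))
            * (Yl0 c₁ c₂ α D x) ^ 2
          - (Yl1 c₁ c₂ ν D x * Yl0 c₁ c₂ α D x - Yl0 c₁ c₂ ν D x * Yl1 c₁ c₂ α D x)
            * ((2:ℕ) * (Yl0 c₁ c₂ α D x) ^ 1 * Yl1 c₁ c₂ α D x))
          / ((Yl0 c₁ c₂ α D x) ^ 2) ^ 2 := by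
      have heq : deriv u₀ =ᶠ[nhds x] U1 :=
        Filter.eventuallyEq_of_mem (Ioi_mem_nhds hx) (fun s hs => hderiv_u₀ s hs)
      rw [heq.deriv_eq, hU1deriv.deriv]
    have hodeα : Yl2 c₁ c₂ α D x = (A * x + B) * Yl0 c₁ c₂ α D x / (2 * σ ^ 2 * x ^ 2) := by
      rw [eq_div_iff (by positivity : (2 * σ ^ 2 * x ^ 2) ≠ 0)]
      linear_combination (2 * σ ^ 2) * (Yl_ode c₁ c₂ α D hαint hD hx)
        + (x * Yl0 c₁ c₂ α D x) * hD2 + (Yl0 c₁ c₂ α D x / 2) * hα2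
    have hodeν : Yl2 c₁ c₂ ν D x
        = (A * x + B + 2 * μ * σ) * Yl0 c₁ c₂ ν D x / (2 * σ ^ 2 * x ^ 2) := by
      rw [eq_div_iff (by positivity : (2 * σ ^ 2 * x ^ 2) ≠ 0)]
      linear_combination (2 * σ ^ 2) * (Yl_ode c₁ c₂ ν D hνint hD hx)
        + (x * Yl0 c₁ c₂ ν D x) * hD2 + (Yl0 c₁ c₂ ν D x / 2) * hν2
    rw [hd2, hderiv_u₀ x hx, hu₀Y x hx, hfY x hx, hU1def, hodeα, hodeν]
    push_cast
    field_simp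
    ring
  · intro hμ0 x hx
    have hνeqα : ν = α := by rw [hν, hα, hμ0]; norm_num
    have hyx := hypos x hx
    have hexp : Real.exp (-(2 * σ * Real.log (y x)) / (2 * σ)) = (y x)⁻¹ := by
      rw [show -(2 * σ * Real.log (y x)) / (2 * σ) = -Real.log (y x) by field_simp,
        Real.exp_neg, Real.exp_log hyx]
    rw [hu₀ x, hF x, hexp, hνeqα]
    have h2A : Real.sqrt (2 * A * x) = Real.sqrt 2 * Real.sqrt A * Real.sqrt x := by
      rw [Real.sqrt_mul (by positivity : (0:ℝ) ≤ 2 * A) x,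
        Real.sqrt_mul (by norm_num : (0:ℝ) ≤ 2) A]
    field_simp [ne_of_gt hyx]
    linear_combination -(hy x)
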